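/- Let W be a reduced word in 𝓕. Then there exists a factorization W = U₁U₂⁻¹ with |W| = |U₁| + |U₂|, where each of U₁, U₂ is either the empty word or a strongly positive word. -/

import Mathlib

open Monoid

variable {I : Type*} {G : I → Type*} [∀ i, Group (G i)]

/-- The element of the free product represented by a list of letters. -/
def listProd (l : List (Σ i, G i)) : CoprodI G :=
  (l.map fun p => CoprodI.of p.2).prod

/-- The formal inverse of a list of letters. -/
def invList (l : List (Σ i, G i)) : List (Σ i, G i) :=
  (l.map fun p => (⟨p.1, p.2⁻¹⟩ : Σ i, G i)).reverse

/-- A list of letters (of a reduced word) is *strongly positive* if every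
nonempty suffix, viewed as an element of the free product, is `≻ 1`. -/
def StronglyPositiveList [LinearOrder (CoprodI G)] (l : List (Σ i, G i)) : Prop :=
  ∀ j < l.length, 1 < listProd (l.drop j)

lemma listProd_append (a b : List (Σ i, G i)) :
    listProd (a ++ b) = listProd a * listProd b := by
  simp [listProd]

lemma invList_append (a b : List (Σ i, G i)) :
    invList (a ++ b) = invList b ++ invList a := by
  simp [invList]

lemma invList_invList (l : List (Σ i, G i)) : invList (invList l) = l := by
  have h : ((fun p => (⟨p.1, p.2⁻¹⟩ : Σ i, G i)) ∘ fun p => (⟨p.1, p.2⁻¹⟩ : Σ i, G i)) =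
      (id : (Σ i, G i) → (Σ i, G i)) := by
    funext p; simp
  simp [invList, List.map_reverse, List.map_map, h]

lemma listProd_invList (l : List (Σ i, G i)) :
    listProd (invList l) = (listProd l)⁻¹ := by
  induction l with
  | nil => simp [listProd, invList]
  | cons a t ih =>
    have : invList (a :: t) = invList t ++ invList [a] := invList_append [a] t
    rw [this, listProd_append, ih]
    simp [listProd, invList]

lemma length_invList (l : List (Σ i, G i)) : (invList l).length = l.length := by
  simp [invList]

/-- A nonempty infix segment of a reduced word has nontrivial product. -/
lemma listProd_ne_one_of_infix (W : CoprodI.Word G) {l : List (Σ i, G i)}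
    (hne : l ≠ []) (hinf : l <:+: W.toList) : listProd l ≠ 1 := by
  classical
  set w' : CoprodI.Word G :=
    { toList := l
      ne_one := fun x hx => W.ne_one x (hinf.subset hx)
      chain_ne := W.chain_ne.infix hinf }
  have hprod : w'.prod = listProd l := rfl
  intro h
  have h1 : w'.prod = (CoprodI.Word.empty : CoprodI.Word G).prod := by
    rw [hprod, h, CoprodI.Word.prod_empty]
  have hinj : Function.Injective (CoprodI.Word.prod : CoprodI.Word G → CoprodI G) :=
    (CoprodI.Word.equiv).symm.injective
  have := hinj h1
  exact hne (congrArg CoprodI.Word.toList this)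

/-- Suppose `W` is a reduced word. Then there exists a factorization `W = U₁U₂⁻¹`,
with `|W| = |U₁| + |U₂|`, such that each of `U₁`, `U₂` is either empty or strongly
positive. -/
theorem exists_factorization_stronglyPositive
    {I : Type*} {G : I → Type*} [∀ i, Group (G i)] [∀ i, Nontrivial (G i)]
    [LinearOrder (CoprodI G)]
    [CovariantClass (CoprodI G) (CoprodI G) (· * ·) (· ≤ ·)]
    (W : CoprodI.Word G) :
    ∃ l₁ l₂ : List (Σ i, G i),
      W.toList = l₁ ++ invList l₂ ∧
      (l₁ = [] ∨ StronglyPositiveList l₁) ∧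
      (l₂ = [] ∨ StronglyPositiveList l₂) := by
  classical
  set L := W.toList with hL
  set k := L.length with hk
  set P : ℕ → CoprodI G := fun i => listProd (L.take i) with hP
  -- decompose prefixes
  have hseg : ∀ i j : ℕ, i ≤ j → P j = P i * listProd ((L.drop i).take (j - i)) := by
    intro i j hij
    have : L.take j = L.take i ++ (L.drop i).take (j - i) := by
      rw [← List.take_add (l := L) (i := i) (j := j - i)]
      congr 1
      omega
    rw [hP]
    simp only
    rw [this, listProd_append]
  -- segments are infixes
  have hinf : ∀ i t : ℕ, ((L.drop i).take t) <:+: L := by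
    intro i t
    exact ((L.drop i).take_prefix t).isInfix.trans (L.drop_suffix i).isInfix
  -- pick the maximizing index
  obtain ⟨m, hm_mem, hm⟩ := Finset.exists_max_image (Finset.range (k + 1)) P
    ⟨0, Finset.mem_range.2 (Nat.succ_pos k)⟩
  have hmk : m ≤ k := Nat.lt_succ_iff.mp (Finset.mem_range.mp hm_mem)
  have hmax : ∀ i ≤ k, P i ≤ P m := fun i hi =>
    hm i (Finset.mem_range.mpr (Nat.lt_succ_of_le hi))
  -- strict maximality
  have hstrict : ∀ i ≤ k, i ≠ m → P i < P m := by
    intro i hik hne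
    refine lt_of_le_of_ne (hmax i hik) ?_
    intro heq
    rcases lt_or_gt_of_ne hne with h | h
    · -- i < m
      have hdecomp := hseg i m (le_of_lt h)
      have hlen : ((L.drop i).take (m - i)).length = m - i := by
        simp only [List.length_take, List.length_drop]
        omega
      have hnonnil : (L.drop i).take (m - i) ≠ [] := by
        intro hnil
        rw [hnil] at hlen
        simp at hlen
        omega
      have := listProd_ne_one_of_infix W hnonnil (hinf i (m - i))
      apply this
      have : P i * listProd ((L.drop i).take (m - i)) = P i * 1 := by
        rw [mul_one, ← hdecomp, ← heq]
      exact mul_left_cancel this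
    · -- m < i
      have hdecomp := hseg m i (le_of_lt h)
      have hlen : ((L.drop m).take (i - m)).length = i - m := by
        simp only [List.length_take, List.length_drop]
        omega
      have hnonnil : (L.drop m).take (i - m) ≠ [] := by
        intro hnil
        rw [hnil] at hlen
        simp at hlen
        omega
      have := listProd_ne_one_of_infix W hnonnil (hinf m (i - m))
      apply this
      have : P m * listProd ((L.drop m).take (i - m)) = P m * 1 := by
        rw [mul_one, ← hdecomp, heq]
      exact mul_left_cancel this
  refine ⟨L.take m, invList (L.drop m), ?_, ?_, ?_⟩
  · rw [invList_invList, List.take_append_drop]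
  · -- l₁
    rcases Nat.eq_zero_or_pos m with hm0 | hm0
    · left; simp [hm0]
    · right
      intro j hj
      have hjm : j < m := by
        have : (L.take m).length = m := by
          rw [List.length_take]; omega
        omega
      have hdt : (L.take m).drop j = (L.drop j).take (m - j) := by
        rw [List.drop_take]
      rw [hdt]
      have hdecomp := hseg j m (le_of_lt hjm)
      have hlt : P j < P m := hstrict j (by omega) (by omega)
      have h1 : 1 ≤ listProd ((L.drop j).take (m - j)) := by
        have := mul_le_mul_right (le_of_lt hlt) (P j)⁻¹
        rwa [inv_mul_cancel, hdecomp, ← mul_assoc, inv_mul_cancel, one_mul] at this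
      refine lt_of_le_of_ne h1 ?_
      intro heq
      apply listProd_ne_one_of_infix W (l := (L.drop j).take (m - j)) ?_ (hinf j (m - j))
      · exact heq.symm
      · intro hnil
        have hlen : ((L.drop j).take (m - j)).length = m - j := by
          simp only [List.length_take, List.length_drop]; omega
        rw [hnil] at hlen
        simp at hlen
        omega
  · -- l₂
    rcases Nat.eq_or_lt_of_le hmk with hmk' | hmk'
    · left
      have : L.drop m = [] := by
        apply List.drop_eq_nil_of_le
        omega
      simp [this, invList]
    · right
      intro j hj
      set D := L.drop m with hD
      have hDlen : D.length = k - m := by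
        rw [hD, List.length_drop]
      have hjlen : j < k - m := by
        rw [length_invList, hDlen] at hj
        exact hj
      set t := k - m - j with ht
      have htpos : 0 < t := by omega
      -- (invList D).drop j = invList (D.take t)
      have hsplit : D = D.take t ++ D.drop t := (List.take_append_drop t D).symm
      have hdrop : (invList D).drop j = invList (D.take t) := by
        conv_lhs => rw [hsplit, invList_append]
        apply List.drop_left'
        rw [length_invList, List.length_drop]
        omega
      rw [hdrop, listProd_invList]
      -- D.take t : product is P m⁻¹ * P (m + t) < 1
      have hdecomp := hseg m (m + t) (Nat.le_add_right m t)
      have hsimp : (m + t) - m = t := by omega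
      rw [hsimp] at hdecomp
      have hlt : P (m + t) < P m := hstrict (m + t) (by omega) (by omega)
      have h1 : listProd (D.take t) ≤ 1 := by
        have h2 := mul_le_mul_right (le_of_lt hlt) (P m)⁻¹
        rw [hdecomp, ← mul_assoc, inv_mul_cancel, one_mul] at h2
        rw [hD]
        exact h2
      have hne1 : listProd (D.take t) ≠ 1 := by
        apply listProd_ne_one_of_infix W (l := D.take t) ?_ (hinf m t)
        intro hnil
        have hlen : (D.take t).length = t := by
          simp only [List.length_take]; omega
        rw [hnil] at hlen
        simp at hlen
        omega
      have hlt1 : listProd (D.take t) < 1 := lt_of_le_of_ne h1 hne1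
      -- conclude 1 < x⁻¹
      have := mul_le_mul_right (le_of_lt hlt1) (listProd (D.take t))⁻¹
      rw [inv_mul_cancel, mul_one] at this
      refine lt_of_le_of_ne this ?_
      intro heq
      apply hne1
      rw [← inv_inv (listProd (D.take t)), ← heq, inv_one]
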